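/- Consistency of the exchangeable permutation probability function: if p^(n)_k(n_1,...,n_k) = φ^(n)_k(n_1,...,n_k)/∏_j (n_j−1)! for an EPPF (φ^(m)), then for every π ∈ S_n with cycle lengths c(π), one has p^(n)_{k(π)}(c(π)) = ∑_{σ ∈ A(π)} p^(n+1)_{k(σ)}(c(σ)), where A(π) is the set of permutations of [n+1] whose deletion of n+1 equals π. -/

import Mathlib

open Equiv Function

/-- Deletion of the element `n+1` (here `Fin.last n`) from the cycle representation:
`d(σ)(i) = σ(i)` if `i ≠ σ⁻¹(n+1)`, and `d(σ)(i) = σ(n+1)` if `i = σ⁻¹(n+1)`. -/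
def delFun {n : ℕ} (σ : Perm (Fin (n + 1))) (i : Fin n) : Fin n :=
  if h : σ i.castSucc = Fin.last n then
    (σ (Fin.last n)).castPred
      (fun hl => (Fin.castSucc_lt_last i).ne (σ.injective (h.trans hl.symm)))
  else
    (σ i.castSucc).castPred h

theorem delFun_injective {n : ℕ} (σ : Perm (Fin (n + 1))) : Injective (delFun σ) := by
  intro i j hij
  have hcast := congrArg Fin.castSucc hij
  unfold delFun at hcast
  split_ifs at hcast with h1 h2 h2 <;>
    simp only [Fin.castSucc_castPred] at hcast
  · exact Fin.castSucc_injective n (σ.injective (h1.trans h2.symm))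
  · exact absurd (σ.injective hcast) (Fin.castSucc_lt_last j).ne'
  · exact absurd (σ.injective hcast) (Fin.castSucc_lt_last i).ne
  · exact Fin.castSucc_injective n (σ.injective hcast)

/-- The deletion map `d : S_{n+1} → S_n`. -/
noncomputable def del {n : ℕ} (σ : Perm (Fin (n + 1))) : Perm (Fin n) :=
  Equiv.ofBijective (delFun σ) (Finite.injective_iff_bijective.mp (delFun_injective σ))


section InsertCycle
open Equiv.Perm Finset
variable {α : Type*} [DecidableEq α] [Fintype α]

theorem support_insertCycle {c : Perm α} {x b : α}
    (hx : x ∉ c.support) (hb : b ∈ c.support) :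
    (swap b x * c).support = insert x c.support := by
  have hcx : c x = x := by simpa using hx
  have hbx : b ≠ x := fun h => hx (h ▸ hb)
  ext y
  simp only [Perm.mem_support, mem_insert, Perm.mul_apply]
  rcases eq_or_ne y x with rfl | hyx
  · simp [hcx, swap_apply_right, hbx]
  · rcases eq_or_ne (c y) y with hcy | hcy
    · have hyb : y ≠ b := fun h => by
        rw [h] at hcy; exact (Perm.mem_support.mp hb) hcy
      rw [hcy, swap_apply_of_ne_of_ne hyb hyx]
      simp [hyx, hcy]
    · have hysupp : y ∈ c.support := Perm.mem_support.mpr hcy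
      constructor
      · intro _; exact Or.inr hcy
      · intro _
        rcases eq_or_ne (c y) b with hcb | hcb
        · rw [hcb, swap_apply_left]; exact hyx.symm
        · have hcyx : c y ≠ x := fun h => hx (h ▸ apply_mem_support.mpr hysupp)
          rw [swap_apply_of_ne_of_ne hcb hcyx]; exact hcy

theorem isCycle_insertCycle {c : Perm α} (hc : c.IsCycle) {x b : α}
    (hx : x ∉ c.support) (hb : b ∈ c.support) :
    IsCycle (swap b x * c) := by
  have hcx : c x = x := by simpa using hx
  have hbx : b ≠ x := fun h => hx (h ▸ hb)
  have hbb : c b ≠ b := Perm.mem_support.mp hb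
  set σ := swap b x * c with hσ
  have hσx : σ x = b := by simp [hσ, hcx, swap_apply_right]
  have horder : orderOf c = c.support.card := hc.orderOf
  -- key: iterates of σ starting at x run through the cycle of c
  have key : ∀ k : ℕ, k < c.support.card → (σ ^ (k + 1)) x = (c ^ k) b := by
    intro k
    induction k with
    | zero => intro _; simpa using hσx
    | succ k ih =>
      intro hk
      have hk' : k < c.support.card := Nat.lt_of_succ_lt hk
      have hckb : (c ^ (k + 1)) b ≠ b := by
        intro h
        have h1 : c ^ (k + 1) = 1 := (hc.pow_eq_one_iff' hbb).mpr h
        have := orderOf_dvd_of_pow_eq_one h1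
        rw [horder] at this
        exact absurd (Nat.le_of_dvd (Nat.succ_pos k) this) (not_le.mpr hk)
      have hckx : (c ^ (k + 1)) b ≠ x := by
        intro h
        exact hx (h ▸ (pow_apply_mem_support).mpr hb)
      have : (σ ^ (k + 1 + 1)) x = σ ((σ ^ (k + 1)) x) := by
        rw [pow_succ', Perm.mul_apply]
      rw [this, ih hk', hσ, Perm.mul_apply, ← Perm.mul_apply c (c ^ k), ← pow_succ',
        swap_apply_of_ne_of_ne hckb hckx]
  refine ⟨x, by rw [hσx]; exact hbx, fun y hy => ?_⟩
  have hy' : y ∈ σ.support := Perm.mem_support.mpr hy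
  rw [hσ, support_insertCycle hx hb] at hy'
  rcases mem_insert.mp hy' with rfl | hy'
  · exact ⟨0, rfl⟩
  · have : SameCycle c b y := hc.sameCycle hbb (Perm.mem_support.mp hy')
    obtain ⟨k, hk, hky⟩ := this.exists_pow_eq'
    rw [horder] at hk
    exact ⟨(k + 1 : ℕ), by rw [zpow_natCast, key k hk, hky]⟩

end InsertCycle

section Insertion
open Equiv.Perm Finset

/-- Extension of a permutation of `Fin n` to `Fin (n+1)` fixing `Fin.last n`. -/
def pext {n : ℕ} (π : Perm (Fin n)) : Perm (Fin (n + 1)) :=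
  π.extendDomain (finSuccAboveEquiv (Fin.last n))

theorem pext_castSucc {n : ℕ} (π : Perm (Fin n)) (i : Fin n) :
    pext π i.castSucc = (π i).castSucc := by
  have := Perm.extendDomain_apply_image π (finSuccAboveEquiv (Fin.last n)) i
  simpa [pext, finSuccAboveEquiv_apply, Fin.succAbove_last] using this

theorem pext_last {n : ℕ} (π : Perm (Fin n)) : pext π (Fin.last n) = Fin.last n :=
  Perm.extendDomain_apply_not_subtype _ _ (by simp)

/-- Insertion of the point `Fin.last n` "after" position `j`. -/
def ins {n : ℕ} (π : Perm (Fin n)) (j : Fin (n + 1)) : Perm (Fin (n + 1)) :=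
  swap (pext π j) (Fin.last n) * pext π

theorem ins_last {n : ℕ} (π : Perm (Fin n)) : ins π (Fin.last n) = pext π := by
  rw [ins, pext_last, swap_self]
  exact one_mul _

theorem ins_apply_self {n : ℕ} (π : Perm (Fin n)) (j : Fin (n + 1)) :
    ins π j j = Fin.last n := by
  simp [ins, swap_apply_left]

theorem del_ins {n : ℕ} (π : Perm (Fin n)) (j : Fin (n + 1)) : del (ins π j) = π := by
  apply Equiv.ext
  intro i
  show delFun (ins π j) i = π i
  rcases eq_or_ne (i.castSucc) j with hij | hij
  · have h1 : ins π j i.castSucc = Fin.last n := hij ▸ ins_apply_self π j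
    have h2 : ins π j (Fin.last n) = pext π j := by
      simp [ins, pext_last, swap_apply_right]
    rw [delFun, dif_pos h1]
    apply Fin.castSucc_injective
    rw [Fin.castSucc_castPred, h2, ← hij, pext_castSucc]
  · have h1 : ins π j i.castSucc = (π i).castSucc := by
      rw [ins, Perm.mul_apply, pext_castSucc,
        swap_apply_of_ne_of_ne (fun h => hij ((pext π).injective
          (by rw [pext_castSucc]; exact h))) (Fin.castSucc_lt_last _).ne]
    have h2 : ins π j i.castSucc ≠ Fin.last n := by
      rw [h1]; exact (Fin.castSucc_lt_last _).ne
    rw [delFun, dif_neg h2]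
    simp [h1]

theorem ins_eq_of_del_eq {n : ℕ} {σ : Perm (Fin (n + 1))} {π : Perm (Fin n)}
    (hσ : del σ = π) : ins π (σ⁻¹ (Fin.last n)) = σ := by
  have hdel : ∀ i, delFun σ i = π i := fun i => by rw [← hσ]; rfl
  set j := σ⁻¹ (Fin.last n) with hj
  have hσj : σ j = Fin.last n := Equiv.apply_symm_apply σ _
  have hlast : ∀ x, x ≠ j → σ x ≠ Fin.last n := fun x hx h =>
    hx (by rw [hj, ← h]; exact (σ.symm_apply_apply x).symm)
  have hfix : ∀ i : Fin n, i.castSucc ≠ j → σ i.castSucc = (π i).castSucc := by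
    intro i hi
    have h2 := hdel i
    rw [delFun, dif_neg (hlast _ hi)] at h2
    rw [← h2, Fin.castSucc_castPred]
  apply Equiv.ext
  intro x
  rcases eq_or_ne x j with rfl | hxj
  · rw [ins_apply_self, hσj]
  · rcases eq_or_ne x (Fin.last n) with rfl | hxl
    · -- then j ≠ last
      have hjl : j ≠ Fin.last n := fun h => hxj h.symm
      obtain ⟨i₀, hi₀⟩ : ∃ i₀ : Fin n, i₀.castSucc = j :=
        ⟨j.castPred hjl, Fin.castSucc_castPred _ _⟩
      have h2 := hdel i₀
      rw [delFun, dif_pos (hi₀ ▸ hσj)] at h2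
      have hσl : σ (Fin.last n) = (π i₀).castSucc := by
        rw [← h2, Fin.castSucc_castPred]
      rw [ins, Perm.mul_apply, pext_last, swap_apply_right, hσl, ← hi₀, pext_castSucc]
    · obtain ⟨i, hi⟩ : ∃ i : Fin n, i.castSucc = x := ⟨x.castPred hxl, Fin.castSucc_castPred _ _⟩
      rw [ins, Perm.mul_apply, ← hi, pext_castSucc]
      rw [swap_apply_of_ne_of_ne, ← hfix i (hi ▸ hxj), hi]
      · intro h
        rcases eq_or_ne j (Fin.last n) with hjl' | hjl
        · rw [hjl', pext_last] at h
          exact (Fin.castSucc_lt_last _).ne h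
        · obtain ⟨i₀, hi₀⟩ : ∃ i₀ : Fin n, i₀.castSucc = j :=
            ⟨j.castPred hjl, Fin.castSucc_castPred _ _⟩
          rw [← hi₀, pext_castSucc] at h
          have : i = i₀ := π.injective (Fin.castSucc_injective _ h)
          exact hxj (by rw [← hi, this, hi₀])
      · exact (Fin.castSucc_lt_last _).ne

theorem ins_injective {n : ℕ} (π : Perm (Fin n)) : Injective (ins π) := by
  intro j j' h
  have h1 := ins_apply_self π j
  rw [h, ← ins_apply_self π j'] at h1
  exact (ins π j').injective h1

/-- The fiber of `del` over `π` is parametrized by `Fin (n+1)`. -/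
noncomputable def insEquiv {n : ℕ} (π : Perm (Fin n)) :
    Fin (n + 1) ≃ {σ : Perm (Fin (n + 1)) // del σ = π} :=
  Equiv.ofBijective (fun j => ⟨ins π j, del_ins π j⟩)
    ⟨fun j j' h => ins_injective π (congrArg Subtype.val h),
     fun ⟨σ, hσ⟩ => ⟨σ⁻¹ (Fin.last n), Subtype.ext (ins_eq_of_del_eq hσ)⟩⟩

end Insertion

/-- An exchangeable partition probability function, as a symmetric function of the
block sizes, encoded on multisets of (positive) block sizes. -/
structure EPPF where
  φ : Multiset ℕ → ℝ
  nonneg : ∀ m, 0 ≤ φ m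
  base : φ {1} = 1
  consistency : ∀ m : Multiset ℕ, (∀ a ∈ m, 0 < a) →
    φ m = ((m.map fun a => φ ((m.erase a).cons (a + 1))).sum) + φ (m.cons 1)

/-- The multiset of all cycle (orbit) lengths of a permutation, including fixed points. -/
def fullCycleType {n : ℕ} (π : Perm (Fin n)) : Multiset ℕ :=
  π.cycleType + Multiset.replicate (Fintype.card {x : Fin n // π x = x}) 1

/-- `p(π) = φ(c(π)) / ∏_j (n_j - 1)!` -/
noncomputable def permProb {n : ℕ} (E : EPPF) (π : Perm (Fin n)) : ℝ :=
  E.φ (fullCycleType π) / ((fullCycleType π).map fun a => ((a - 1).factorial : ℝ)).prod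

section CycleTypeLemmas
open Equiv.Perm Finset


theorem card_fixed_eq {N : ℕ} (σ : Perm (Fin N)) :
    Fintype.card {x : Fin N // σ x = x} = N - σ.support.card := by
  classical
  have h := Finset.card_filter_add_card_filter_not
    (s := (univ : Finset (Fin N))) (p := fun x => σ x = x)
  have hsupp : univ.filter (fun x => ¬ σ x = x) = σ.support := by
    ext x; simp [Perm.mem_support]
  rw [hsupp, Finset.card_univ, Fintype.card_fin] at h
  rw [Fintype.card_subtype]
  omega

theorem support_card_le {N : ℕ} (σ : Perm (Fin N)) : σ.support.card ≤ N := by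
  simpa using Finset.card_le_univ σ.support

theorem cycleType_swap' {N : ℕ} {a b : Fin N} (h : a ≠ b) :
    (swap a b).cycleType = {2} := by
  rw [(isCycle_swap h).cycleType, card_support_swap h]


theorem fullCycleType_eq {N : ℕ} (σ : Perm (Fin N)) :
    fullCycleType σ = σ.cycleType + Multiset.replicate (N - σ.support.card) 1 := by
  rw [fullCycleType, card_fixed_eq]

/-- The length of the orbit of `i` under `π`. -/
def cyclen {n : ℕ} (π : Perm (Fin n)) (i : Fin n) : ℕ :=
  if π i = i then 1 else (π.cycleOf i).support.card

theorem fullCycleType_ins_last {n : ℕ} (π : Perm (Fin n)) :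
    fullCycleType (ins π (Fin.last n)) = 1 ::ₘ fullCycleType π := by
  have hs := support_card_le π
  rw [ins_last, fullCycleType_eq, fullCycleType_eq, pext,
    cycleType_extendDomain, card_support_extend_domain,
    show n + 1 - π.support.card = (n - π.support.card) + 1 from by omega,
    Multiset.replicate_succ, Multiset.add_cons]

theorem cyclen_mem {n : ℕ} (π : Perm (Fin n)) (i : Fin n) :
    cyclen π i ∈ fullCycleType π := by
  rw [fullCycleType_eq, cyclen]
  split_ifs with hfix
  · refine Multiset.mem_add.mpr (Or.inr ?_)
    rw [Multiset.mem_replicate]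
    have hne' : π.support ≠ univ := fun h => (Perm.mem_support.mp (h ▸ mem_univ i)) hfix
    have hlt := Finset.card_lt_card (Finset.ssubset_univ_iff.mpr hne')
    rw [Finset.card_univ, Fintype.card_fin] at hlt
    exact ⟨by omega, rfl⟩
  · refine Multiset.mem_add.mpr (Or.inl ?_)
    rw [cycleType_def]
    exact Multiset.mem_map.mpr ⟨π.cycleOf i,
      Finset.mem_def.mp (cycleOf_mem_cycleFactorsFinset_iff.mpr (Perm.mem_support.mpr hfix)),
      rfl⟩

theorem fullCycleType_ins_castSucc {n : ℕ} (π : Perm (Fin n)) (i : Fin n) :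
    fullCycleType (ins π i.castSucc)
      = (cyclen π i + 1) ::ₘ (fullCycleType π).erase (cyclen π i) := by
  classical
  have hsle := support_card_le π
  by_cases hfix : π i = i
  · have hcyclen : cyclen π i = 1 := if_pos hfix
    have hins : ins π i.castSucc = swap i.castSucc (Fin.last n) * pext π := by
      rw [ins, pext_castSucc, hfix]
    have hne : i.castSucc ≠ Fin.last n := (Fin.castSucc_lt_last i).ne
    have hd : Perm.Disjoint (swap i.castSucc (Fin.last n)) (pext π) := by
      intro x
      rcases eq_or_ne x i.castSucc with rfl | hx1
      · right; rw [pext_castSucc, hfix]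
      · rcases eq_or_ne x (Fin.last n) with rfl | hx2
        · right; exact pext_last π
        · left; exact swap_apply_of_ne_of_ne hx1 hx2
    have hslt : π.support.card < n := by
      have hne' : π.support ≠ univ := fun h => (Perm.mem_support.mp (h ▸ mem_univ i)) hfix
      have hlt := Finset.card_lt_card (Finset.ssubset_univ_iff.mpr hne')
      rwa [Finset.card_univ, Fintype.card_fin] at hlt
    rw [hins, fullCycleType_eq, hd.cycleType_mul, cycleType_swap' hne, hd.card_support_mul,
      card_support_swap hne, pext, cycleType_extendDomain, card_support_extend_domain,
      fullCycleType_eq, hcyclen]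
    have hmem1 : (1:ℕ) ∈ Multiset.replicate (n - π.support.card) 1 :=
      Multiset.mem_replicate.mpr ⟨by omega, rfl⟩
    rw [Multiset.erase_add_right_pos _ hmem1,
      show n - π.support.card = (n - π.support.card - 1) + 1 from by omega,
      Multiset.replicate_succ, Multiset.erase_cons_head,
      show n + 1 - (2 + π.support.card) = n - π.support.card - 1 from by omega,
      Multiset.singleton_add, Multiset.cons_add]
  · have hcyclen : cyclen π i = (π.cycleOf i).support.card := if_neg hfix
    set c₀ := π.cycleOf i with hc₀
    set ℓ := c₀.support.card with hℓ
    have hc₀cyc : c₀.IsCycle := isCycle_cycleOf π hfix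
    have hmem : c₀ ∈ π.cycleFactorsFinset :=
      cycleOf_mem_cycleFactorsFinset_iff.mpr (Perm.mem_support.mpr hfix)
    have hd₀ : Perm.Disjoint (π * c₀⁻¹) c₀ := disjoint_mul_inv_of_mem_cycleFactorsFinset hmem
    have hπdecomp : (π * c₀⁻¹) * c₀ = π := inv_mul_cancel_right π c₀
    set G := pext (π * c₀⁻¹) with hG
    set C := pext c₀ with hC
    have hGC : pext π = G * C := by
      rw [hG, hC, pext, pext, pext, Perm.extendDomain_mul, hπdecomp]
    have hdGC : Perm.Disjoint G C := hd₀.extendDomain _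
    set b := (π i).castSucc with hb
    have hCb : C b = (π (π i)).castSucc := by
      rw [hC, hb, pext_castSucc, hc₀, ← cycleOf_self_apply π i, cycleOf_apply_self]
    have hbmem : b ∈ C.support := by
      rw [Perm.mem_support, hCb, hb]
      intro h
      exact hfix (π.injective (Fin.castSucc_injective _ h))
    have hlastC : Fin.last n ∉ C.support := by
      rw [Perm.mem_support, hC, pext_last]
      simp
    have hlastG : G (Fin.last n) = Fin.last n := pext_last _
    have hGb : G b = b := by
      rcases hdGC b with h | h
      · exact h
      · exact absurd h (Perm.mem_support.mp hbmem)
    have hdswapG : Perm.Disjoint (swap b (Fin.last n)) G := by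
      intro x
      rcases eq_or_ne x b with rfl | hx1
      · right; exact hGb
      · rcases eq_or_ne x (Fin.last n) with rfl | hx2
        · right; exact hlastG
        · left; exact swap_apply_of_ne_of_ne hx1 hx2
    have hins : ins π i.castSucc = G * (swap b (Fin.last n) * C) := by
      rw [ins, pext_castSucc, ← hb, hGC, ← mul_assoc, hdswapG.commute.eq, mul_assoc]
    have hC'supp : (swap b (Fin.last n) * C).support = insert (Fin.last n) C.support :=
      support_insertCycle hlastC hbmem
    have hC'cyc : (swap b (Fin.last n) * C).IsCycle :=
      isCycle_insertCycle (hc₀cyc.extendDomain _) hlastC hbmem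
    have hCsupp : C.support.card = ℓ := by rw [hC, pext, card_support_extend_domain, hℓ]
    have hC'card : (swap b (Fin.last n) * C).support.card = ℓ + 1 := by
      rw [hC'supp, Finset.card_insert_of_notMem hlastC, hCsupp]
    have hdGC' : Perm.Disjoint G (swap b (Fin.last n) * C) := by
      rw [Perm.disjoint_iff_disjoint_support, hC'supp, Finset.disjoint_insert_right]
      exact ⟨fun h => (Perm.mem_support.mp h) hlastG,
        Perm.disjoint_iff_disjoint_support.mp hdGC⟩
    have hGcard : (π * c₀⁻¹).support.card + ℓ = π.support.card := by
      rw [hℓ, ← hd₀.card_support_mul, hπdecomp]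
    have hGscard : G.support.card = (π * c₀⁻¹).support.card := by
      rw [hG, pext, card_support_extend_domain]
    have hGtype : G.cycleType = π.cycleType.erase ℓ := by
      rw [hG, pext, cycleType_extendDomain,
        cycleType_mul_inv_mem_cycleFactorsFinset_eq_sub hmem, hc₀cyc.cycleType,
        Multiset.sub_singleton]
    have hℓmem : ℓ ∈ π.cycleType := by
      rw [cycleType_def]
      exact Multiset.mem_map.mpr ⟨c₀, Finset.mem_def.mp hmem, rfl⟩
    have hcyclen' : cyclen π i = ℓ := hcyclen
    rw [hins, fullCycleType_eq, hdGC'.cycleType_mul, hGtype, hC'cyc.cycleType, hC'card,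
      hdGC'.card_support_mul, hC'card, hGscard, fullCycleType_eq, hcyclen',
      show n + 1 - ((π * c₀⁻¹).support.card + (ℓ + 1)) = n - π.support.card from by omega,
      Multiset.erase_add_left_pos _ hℓmem,
      add_comm (π.cycleType.erase ℓ) {ℓ + 1}, Multiset.singleton_add, Multiset.cons_add]

theorem sum_cyclen {n : ℕ} (π : Perm (Fin n)) (h : ℕ → ℝ) :
    ∑ i : Fin n, h (cyclen π i) = ((fullCycleType π).map fun a => a * h a).sum := by
  classical
  rw [← Finset.sum_add_sum_compl π.support, fullCycleType_eq, Multiset.map_add,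
    Multiset.sum_add]
  congr 1
  · have hsupp : π.support = π.cycleFactorsFinset.biUnion Equiv.Perm.support := by
      ext x
      simp only [Finset.mem_biUnion]
      constructor
      · intro hx
        exact ⟨π.cycleOf x, cycleOf_mem_cycleFactorsFinset_iff.mpr hx,
          mem_support_cycleOf_iff.mpr ⟨Perm.SameCycle.refl _ _, hx⟩⟩
      · rintro ⟨c, hc, hxc⟩
        rw [Perm.mem_support, ← (mem_cycleFactorsFinset_iff.mp hc).2 x hxc]
        exact Perm.mem_support.mp hxc
    have hinner : ∀ c ∈ π.cycleFactorsFinset, (∑ i ∈ c.support, h (cyclen π i))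
        = (c.support.card : ℝ) * h c.support.card := by
      intro c hc
      have hcong : ∀ i ∈ c.support, h (cyclen π i) = h c.support.card := by
        intro i hi
        have hπi : π i ≠ i := by
          rw [← (mem_cycleFactorsFinset_iff.mp hc).2 i hi]
          exact Perm.mem_support.mp hi
        rw [cyclen, if_neg hπi, ← cycle_is_cycleOf hi hc]
      rw [Finset.sum_congr rfl hcong, Finset.sum_const, nsmul_eq_mul]
    rw [hsupp, Finset.sum_biUnion, Finset.sum_congr rfl hinner, cycleType_def,
      Multiset.map_map]
    · rfl
    · intro c hc d hd hcd
      exact disjoint_iff_disjoint_support.mp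
        (cycleFactorsFinset_pairwise_disjoint π hc hd hcd)
  · have hterm : ∀ i ∈ π.supportᶜ, h (cyclen π i) = h 1 := by
      intro i hi
      rw [cyclen, if_pos (Perm.notMem_support.mp (Finset.mem_compl.mp hi))]
    rw [Finset.sum_congr rfl hterm, Finset.sum_const, Finset.card_compl,
      Multiset.map_replicate, Multiset.sum_replicate, nsmul_eq_mul, nsmul_eq_mul,
      Fintype.card_fin]
    norm_num

end CycleTypeLemmas

/-- Consistency of the exchangeable permutation probability function:
`p^(n)(π) = ∑_{σ ∈ A(π)} p^(n+1)(σ)`. -/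
theorem permProb_consistency (n : ℕ) (hn : 1 ≤ n) (E : EPPF) (π : Perm (Fin n)) :
    permProb E π = ∑ σ : {σ : Perm (Fin (n + 1)) // del σ = π}, permProb E σ.1 := by
  classical
  have h0 : ∑ σ : {σ : Perm (Fin (n + 1)) // del σ = π}, permProb E σ.1
      = ∑ j : Fin (n + 1), permProb E (ins π j) :=
    (Equiv.sum_comp (insEquiv π) (fun σ => permProb E σ.1)).symm
  rw [h0, Fin.sum_univ_castSucc]
  set m := fullCycleType π with hm
  set D : ℝ := (m.map fun a => ((a - 1).factorial : ℝ)).prod with hD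
  have hpos : ∀ a ∈ m, 0 < a := by
    intro a ha
    rw [hm, fullCycleType_eq] at ha
    rcases Multiset.mem_add.mp ha with h | h
    · have := Equiv.Perm.two_le_of_mem_cycleType h; omega
    · have := Multiset.eq_of_mem_replicate h; omega
  have hD0 : 0 < D := by
    rw [hD]
    apply Multiset.prod_pos
    intro x hx
    obtain ⟨a, _, rfl⟩ := Multiset.mem_map.mp hx
    positivity
  have hlastterm : permProb E (ins π (Fin.last n)) = E.φ (1 ::ₘ m) / D := by
    rw [permProb, fullCycleType_ins_last, Multiset.map_cons, Multiset.prod_cons, ← hm, ← hD]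
    norm_num
  have hterm : ∀ i : Fin n, permProb E (ins π i.castSucc)
      = E.φ ((cyclen π i + 1) ::ₘ m.erase (cyclen π i)) / ((cyclen π i : ℝ) * D) := by
    intro i
    have hmem : cyclen π i ∈ m := hm ▸ cyclen_mem π i
    have hposℓ : 0 < cyclen π i := hpos _ hmem
    have hP := Multiset.prod_map_erase (f := fun a => (((a : ℕ) - 1).factorial : ℝ)) hmem
    have hfact : ((cyclen π i).factorial : ℝ)
        = (cyclen π i) * ((cyclen π i - 1).factorial : ℝ) := by
      conv_lhs => rw [show cyclen π i = cyclen π i - 1 + 1 from by omega]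
      rw [Nat.factorial_succ]
      push_cast [show cyclen π i - 1 + 1 = cyclen π i from by omega]
      ring
    rw [permProb, fullCycleType_ins_castSucc, ← hm, Multiset.map_cons, Multiset.prod_cons]
    congr 1
    rw [Nat.add_sub_cancel, hfact, hD, ← hP]
    ring
  rw [Finset.sum_congr rfl (fun i _ => hterm i), hlastterm]
  have hsum := sum_cyclen π (fun a : ℕ => E.φ ((a + 1) ::ₘ m.erase a) / ((a : ℝ) * D))
  rw [← hm] at hsum
  rw [hsum]
  have hmap : (m.map fun a : ℕ => (a : ℝ) * (E.φ ((a + 1) ::ₘ m.erase a) / ((a : ℝ) * D)))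
      = m.map fun a : ℕ => E.φ ((a + 1) ::ₘ m.erase a) * D⁻¹ := by
    apply Multiset.map_congr rfl
    intro a ha
    have ha0 : (a : ℝ) ≠ 0 := Nat.cast_ne_zero.mpr (hpos a ha).ne'
    field_simp
  rw [hmap, Multiset.sum_map_mul_right, permProb, ← hm, ← hD, E.consistency m hpos]
  field_simp
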